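/- Let k be a kernel on X with RKHS H_k, and suppose exp(t·k(x,y)) is strictly positive definite on X × X for some t > 0. Then the kernel (x,y) ↦ exp(−t ‖k_x − k_y‖²_{H_k}) is strictly positive definite on X × X, where k_x denotes the reproducing kernel function at x. -/

import Mathlib

open scoped ComplexOrder ComplexConjugate
open Matrix

-- Schur product strict positivity (kernel-sum form)
lemma schur_aux {n : ℕ} (A B : Matrix (Fin n) (Fin n) ℂ)
    (hA : ∀ c : Fin n → ℂ, c ≠ 0 → 0 < ∑ i, ∑ j, c i * conj (c j) * A i j)
    (hB : B.PosSemidef) (hdiag : ∀ i, B i i ≠ 0)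
    (c : Fin n → ℂ) (hc : c ≠ 0) :
    0 < ∑ i, ∑ j, c i * conj (c j) * (A i j * B i j) := by
  obtain ⟨L, hL⟩ : ∃ L : Matrix (Fin n) (Fin n) ℂ, B = Lᴴ * L := by
    open scoped MatrixOrder in
    exact CStarAlgebra.nonneg_iff_eq_star_mul_self.mp hB.nonneg
  have hA0 : ∀ v : Fin n → ℂ, 0 ≤ ∑ i, ∑ j, v i * conj (v j) * A i j := by
    intro v
    rcases eq_or_ne v 0 with rfl | h
    · simp
    · exact (hA v h).le
  set v : Fin n → Fin n → ℂ := fun r i => c i * conj (L r i) with hv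
  have hsum : ∑ i, ∑ j, c i * conj (c j) * (A i j * B i j)
      = ∑ r, ∑ i, ∑ j, v r i * conj (v r j) * A i j := by
    have hBij : ∀ i j, B i j = ∑ r, conj (L r i) * L r j := by
      intro i j
      rw [hL, Matrix.mul_apply]
      simp [Matrix.conjTranspose_apply]
    symm
    rw [Finset.sum_comm]
    refine Finset.sum_congr rfl fun i _ => ?_
    rw [Finset.sum_comm]
    refine Finset.sum_congr rfl fun j _ => ?_
    rw [hBij i j, Finset.mul_sum, Finset.mul_sum]
    refine Finset.sum_congr rfl fun r _ => ?_
    simp only [hv, _root_.map_mul, Complex.conj_conj]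
    ring
  rw [hsum]
  obtain ⟨i0, hi0⟩ := Function.ne_iff.mp hc
  have hBii := hdiag i0
  have : ∃ r0, L r0 i0 ≠ 0 := by
    by_contra h
    push_neg at h
    apply hBii
    rw [hL, Matrix.mul_apply]
    simp [Matrix.conjTranspose_apply, h]
  obtain ⟨r0, hr0⟩ := this
  have hvne : v r0 ≠ 0 := by
    intro h
    have := congrFun h i0
    simp [hv] at this
    rcases this with h' | h'
    · exact hi0 h'
    · exact hr0 (by simpa using congrArg (starRingEnd ℂ) h')
  exact Finset.sum_pos' (fun r _ => hA0 (v r)) ⟨r0, Finset.mem_univ r0, hA (v r0) hvne⟩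

/-- `k` is a kernel function on `X`: self-adjoint and positive semi-definite. -/
def IsKernel {X : Type*} (k : X → X → ℂ) : Prop :=
  (∀ x y, k y x = conj (k x y)) ∧
  ∀ (n : ℕ) (x : Fin n → X) (c : Fin n → ℂ),
    0 ≤ ∑ i, ∑ j, c i * conj (c j) * k (x i) (x j)

/-- `k` is strictly positive definite on `X`. -/
def IsStrictPosKernel {X : Type*} (k : X → X → ℂ) : Prop :=
  ∀ (n : ℕ) (x : Fin n → X), Function.Injective x →
    ∀ c : Fin n → ℂ, c ≠ 0 →
      0 < ∑ i, ∑ j, c i * conj (c j) * k (x i) (x j)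

/-- If `exp (t k)` is strictly positive definite for some `t > 0`, then so is
`(x,y) ↦ exp (−t ‖k_x − k_y‖²_{H_k})`, where
`‖k_x − k_y‖²_{H_k} = k(x,x) − 2 Re k(x,y) + k(y,y)`. -/
theorem exp_neg_dist_sq_isStrictPosKernel {X : Type*} (k : X → X → ℂ) (hk : IsKernel k)
    (t : ℝ) (ht : 0 < t)
    (hexp : IsStrictPosKernel (fun x y => Complex.exp ((t : ℂ) * k x y))) :
    IsStrictPosKernel (fun x y =>
      (Real.exp (-t * ((k x x).re - 2 * (k x y).re + (k y y).re)) : ℂ)) := by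
  intro n x hx c hc
  let M : Matrix (Fin n) (Fin n) ℂ := fun i j => Complex.exp ((t : ℂ) * k (x i) (x j))
  have hherm : ∀ i j, M j i = conj (M i j) := by
    intro i j
    show Complex.exp ((t : ℂ) * k (x j) (x i)) = conj (Complex.exp ((t : ℂ) * k (x i) (x j)))
    rw [← Complex.exp_conj, _root_.map_mul, Complex.conj_ofReal, ← hk.1 (x i) (x j)]
  have hAstrict : ∀ d : Fin n → ℂ, d ≠ 0 → 0 < ∑ i, ∑ j, d i * conj (d j) * M i j :=
    fun d hd => hexp n x hx d hd
  have hBpsd : (Mᵀ).PosSemidef := by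
    refine Matrix.posSemidef_iff_dotProduct_mulVec.mpr ⟨?_, ?_⟩
    · ext i j
      simp only [Matrix.conjTranspose_apply, Matrix.transpose_apply, RCLike.star_def]
      exact (hherm i j).symm
    · intro y
      rcases eq_or_ne y 0 with rfl | hy
      · simp
      · have key : dotProduct (star y) (Matrix.mulVec Mᵀ y)
            = ∑ i, ∑ j, y i * conj (y j) * M i j := by
          simp only [dotProduct, Matrix.mulVec, Pi.star_apply,
            Matrix.transpose_apply, Finset.mul_sum]
          rw [Finset.sum_comm]
          refine Finset.sum_congr rfl fun i _ => Finset.sum_congr rfl fun j _ => ?_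
          simp only [RCLike.star_def]
          ring
        rw [key]
        exact (hAstrict y hy).le
  have hdiag : ∀ i, (Mᵀ) i i ≠ 0 := fun i => Complex.exp_ne_zero _
  let d : Fin n → ℂ := fun i => c i * Complex.exp (-(t : ℂ) * ((k (x i) (x i)).re : ℂ))
  have hdne : d ≠ 0 := by
    obtain ⟨i0, hi0⟩ := Function.ne_iff.mp hc
    refine Function.ne_iff.mpr ⟨i0, ?_⟩
    simp only [Pi.zero_apply] at hi0 ⊢
    exact mul_ne_zero hi0 (Complex.exp_ne_zero _)
  have hconjE : ∀ r : ℝ, conj (Complex.exp (-(t : ℂ) * (r : ℂ)))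
      = Complex.exp (-(t : ℂ) * (r : ℂ)) := by
    intro r
    rw [← Complex.exp_conj, _root_.map_mul, _root_.map_neg, Complex.conj_ofReal, Complex.conj_ofReal]
  have hval : ∀ i j, (Real.exp (-t * ((k (x i) (x i)).re - 2 * (k (x i) (x j)).re
        + (k (x j) (x j)).re)) : ℂ)
      = Complex.exp (-(t : ℂ) * ((k (x i) (x i)).re : ℂ))
        * Complex.exp (-(t : ℂ) * ((k (x j) (x j)).re : ℂ)) * (M i j * Mᵀ i j) := by
    intro i j
    have hT : (Mᵀ) i j = Complex.exp ((t : ℂ) * conj (k (x i) (x j))) := by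
      show Complex.exp ((t : ℂ) * k (x j) (x i)) = _
      rw [hk.1 (x i) (x j)]
    rw [hT]
    show _ = _ * _ * (Complex.exp ((t : ℂ) * k (x i) (x j)) * _)
    rw [Complex.ofReal_exp, ← Complex.exp_add, ← Complex.exp_add, ← Complex.exp_add]
    congr 1
    rw [show (t : ℂ) * k (x i) (x j) + (t : ℂ) * conj (k (x i) (x j))
        = (t : ℂ) * (k (x i) (x j) + conj (k (x i) (x j))) from by ring,
      Complex.add_conj]
    push_cast
    ring
  have hgoal : ∑ i, ∑ j, c i * conj (c j) *
        (Real.exp (-t * ((k (x i) (x i)).re - 2 * (k (x i) (x j)).re + (k (x j) (x j)).re)) : ℂ)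
      = ∑ i, ∑ j, d i * conj (d j) * (M i j * (Mᵀ) i j) := by
    refine Finset.sum_congr rfl fun i _ => Finset.sum_congr rfl fun j _ => ?_
    rw [hval i j]
    show _ = c i * _ * conj (c j * _) * _
    rw [_root_.map_mul (starRingEnd ℂ), hconjE]
    ring
  rw [hgoal]
  exact schur_aux M (Mᵀ) hAstrict hBpsd hdiag d hdne
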